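/- Let L be an e-cyclic residuated lattice and let X, Y be convex subalgebras of L. Then the set X → Y := {a ∈ L : |a| ∨ |x| ∈ Y for all x ∈ X} is a convex subalgebra of L, X ∩ (X → Y) ⊆ Y, and every convex subalgebra Z of L with X ∩ Z ⊆ Y satisfies Z ⊆ X → Y (i.e., X → Y is the relative pseudocomplement of X relative to Y in the lattice of convex subalgebras). In particular, X^⊥ = {a ∈ L : |a| ∨ |x| = e for all x ∈ X} is the largest convex subalgebra Z of L with X ∩ Z = {e}. -/
import Mathlib


universe u

/-- A residuated lattice: a lattice-ordered monoid with left and right residuals.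
`ldiv x z` is `x \ z` and `rdiv z y` is `z / y`. -/
class ResiduatedLattice (α : Type u) extends Lattice α, Monoid α where
  ldiv : α → α → α
  rdiv : α → α → α
  mul_le_iff_le_ldiv : ∀ x y z : α, x * y ≤ z ↔ y ≤ ldiv x z
  mul_le_iff_le_rdiv : ∀ x y z : α, x * y ≤ z ↔ x ≤ rdiv z y

namespace ResiduatedLattice

variable {α : Type u} [ResiduatedLattice α]

/-- `L` is e-cyclic if `x \ e = e / x` for all `x`. -/
def ECyclic (α : Type u) [ResiduatedLattice α] : Prop :=
  ∀ x : α, ldiv x 1 = rdiv 1 x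

/-- Absolute value: `|x| = x ⊓ (e / x) ⊓ e`. -/
def absv (x : α) : α := x ⊓ rdiv 1 x ⊓ 1

/-- A convex subalgebra: contains `e`, closed under all the operations, and order-convex. -/
structure IsConvexSubalgebra (H : Set α) : Prop where
  one_mem : (1 : α) ∈ H
  mul_mem : ∀ ⦃x⦄, x ∈ H → ∀ ⦃y⦄, y ∈ H → x * y ∈ H
  sup_mem : ∀ ⦃x⦄, x ∈ H → ∀ ⦃y⦄, y ∈ H → x ⊔ y ∈ H
  inf_mem : ∀ ⦃x⦄, x ∈ H → ∀ ⦃y⦄, y ∈ H → x ⊓ y ∈ H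
  ldiv_mem : ∀ ⦃x⦄, x ∈ H → ∀ ⦃y⦄, y ∈ H → ldiv x y ∈ H
  rdiv_mem : ∀ ⦃x⦄, x ∈ H → ∀ ⦃y⦄, y ∈ H → rdiv x y ∈ H
  convex : ∀ ⦃a⦄, a ∈ H → ∀ ⦃b⦄, b ∈ H → ∀ ⦃x⦄, a ≤ x → x ≤ b → x ∈ H

/-- `C[S]`: the smallest convex subalgebra containing `S`. -/
def convexClosure (S : Set α) : Set α :=
  ⋂₀ {H : Set α | IsConvexSubalgebra H ∧ S ⊆ H}

end ResiduatedLattice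

open ResiduatedLattice

/-- The polar `S^⊥ = {a : |a| ⊔ |s| = e for all s ∈ S}`. -/
def polar {α : Type u} [ResiduatedLattice α] (S : Set α) : Set α :=
  {a : α | ∀ s ∈ S, absv a ⊔ absv s = 1}

namespace ResiduatedLattice

variable {α : Type u} [ResiduatedLattice α]

lemma le_ldiv_iff {x y z : α} : y ≤ ldiv x z ↔ x * y ≤ z :=
  (mul_le_iff_le_ldiv x y z).symm

lemma le_rdiv_iff {x y z : α} : x ≤ rdiv z y ↔ x * y ≤ z :=
  (mul_le_iff_le_rdiv x y z).symm

lemma mul_ldiv_le (x z : α) : x * ldiv x z ≤ z := le_ldiv_iff.1 le_rfl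

lemma rdiv_mul_le (z y : α) : rdiv z y * y ≤ z := le_rdiv_iff.1 le_rfl

lemma mul_mono {a b c d : α} (h1 : a ≤ b) (h2 : c ≤ d) : a * c ≤ b * d := by
  have h3 : a * c ≤ b * c :=
    le_rdiv_iff.1 (le_trans h1 (le_rdiv_iff.2 le_rfl))
  have h4 : b * c ≤ b * d :=
    le_ldiv_iff.1 (le_trans h2 (le_ldiv_iff.2 le_rfl))
  exact le_trans h3 h4

lemma mul_le_one' {a b : α} (h1 : a ≤ 1) (h2 : b ≤ 1) : a * b ≤ 1 := by
  have := mul_mono h1 h2; rwa [one_mul] at this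

lemma mul_le_left' {a b : α} (h : b ≤ 1) : a * b ≤ a := by
  have := mul_mono (le_refl a) h; rwa [mul_one] at this

lemma mul_le_right' {a b : α} (h : a ≤ 1) : a * b ≤ b := by
  have := mul_mono h (le_refl b); rwa [one_mul] at this

lemma mul_sup' (x y z : α) : x * (y ⊔ z) = x * y ⊔ x * z :=
  le_antisymm
    (le_ldiv_iff.1 (sup_le (le_ldiv_iff.2 le_sup_left) (le_ldiv_iff.2 le_sup_right)))
    (sup_le (mul_mono le_rfl le_sup_left) (mul_mono le_rfl le_sup_right))

lemma sup_mul' (x y z : α) : (y ⊔ z) * x = y * x ⊔ z * x :=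
  le_antisymm
    (le_rdiv_iff.1 (sup_le (le_rdiv_iff.2 le_sup_left) (le_rdiv_iff.2 le_sup_right)))
    (sup_le (mul_mono le_sup_left le_rfl) (mul_mono le_sup_right le_rfl))

lemma absv_le_one (x : α) : absv x ≤ 1 := inf_le_right

lemma absv_le_self (x : α) : absv x ≤ x := le_trans inf_le_left inf_le_left

lemma absv_le_rdiv (x : α) : absv x ≤ rdiv 1 x := le_trans inf_le_left inf_le_right

lemma absv_mul_self_le (x : α) : absv x * x ≤ 1 := le_rdiv_iff.1 (absv_le_rdiv x)

lemma self_mul_absv_le (hec : ECyclic α) (x : α) : x * absv x ≤ 1 :=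
  le_ldiv_iff.1 (by rw [hec x]; exact absv_le_rdiv x)

lemma rdiv_one_one : rdiv (1 : α) 1 = 1 := by
  apply le_antisymm
  · have := rdiv_mul_le (1 : α) 1; rwa [mul_one] at this
  · exact le_rdiv_iff.2 (by rw [mul_one])

lemma ldiv_one_one : ldiv (1 : α) 1 = 1 := by
  apply le_antisymm
  · have := mul_ldiv_le (1 : α) 1; rwa [one_mul] at this
  · exact le_ldiv_iff.2 (by rw [mul_one])

lemma absv_one : absv (1 : α) = 1 := by
  rw [absv, rdiv_one_one]; simp

lemma le_absv {n x : α} (h1 : n ≤ x) (h2 : n * x ≤ 1) (h3 : n ≤ 1) : n ≤ absv x :=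
  le_inf (le_inf h1 (le_rdiv_iff.2 h2)) h3

lemma sup_mul_sup_le {p q r : α} (hp : p ≤ 1) (hq : q ≤ 1) (hr : r ≤ 1) :
    (p ⊔ r) * (q ⊔ r) ≤ p * q ⊔ r := by
  rw [mul_sup', sup_mul', sup_mul']
  exact sup_le (sup_le le_sup_left (le_sup_of_le_right (mul_le_left' hq)))
    (sup_le (le_sup_of_le_right (mul_le_right' hp))
      (le_sup_of_le_right (mul_le_left' hr)))

lemma absv_mem {H : Set α} (hH : IsConvexSubalgebra H) {a : α} (ha : a ∈ H) :
    absv a ∈ H :=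
  hH.inf_mem (hH.inf_mem ha (hH.rdiv_mem hH.one_mem ha)) hH.one_mem

lemma mem_of_absv_mem {H : Set α} (hH : IsConvexSubalgebra H) {a : α}
    (h : absv a ∈ H) : a ∈ H := by
  have h1 : a ≤ ldiv (absv a) 1 := le_ldiv_iff.2 (absv_mul_self_le a)
  exact hH.convex h (hH.ldiv_mem h hH.one_mem) (absv_le_self a) h1

lemma key2 {Y : Set α} (hY : IsConvexSubalgebra Y) {a b c x : α}
    (hA : absv a ⊔ absv x ∈ Y) (hB : absv b ⊔ absv x ∈ Y)
    (hn : absv a * absv b ≤ absv c) : absv c ⊔ absv x ∈ Y := by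
  have h1 : (absv a ⊔ absv x) * (absv b ⊔ absv x) ≤ absv c ⊔ absv x :=
    le_trans (sup_mul_sup_le (absv_le_one a) (absv_le_one b) (absv_le_one x))
      (sup_le_sup_right hn _)
  exact hY.convex (hY.mul_mem hA hB) hY.one_mem h1
    (sup_le (absv_le_one c) (absv_le_one x))

lemma key4 {Y : Set α} (hY : IsConvexSubalgebra Y) {a b c d w x : α}
    (hA : absv a ⊔ absv x ∈ Y) (hB : absv b ⊔ absv x ∈ Y)
    (hC : absv c ⊔ absv x ∈ Y) (hD : absv d ⊔ absv x ∈ Y)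
    (hn : absv a * absv b * (absv c * absv d) ≤ absv w) :
    absv w ⊔ absv x ∈ Y := by
  have h1 : (absv a ⊔ absv x) * (absv b ⊔ absv x) *
      ((absv c ⊔ absv x) * (absv d ⊔ absv x)) ≤ absv w ⊔ absv x := by
    calc (absv a ⊔ absv x) * (absv b ⊔ absv x) *
        ((absv c ⊔ absv x) * (absv d ⊔ absv x))
        ≤ (absv a * absv b ⊔ absv x) * (absv c * absv d ⊔ absv x) :=
          mul_mono (sup_mul_sup_le (absv_le_one a) (absv_le_one b) (absv_le_one x))
            (sup_mul_sup_le (absv_le_one c) (absv_le_one d) (absv_le_one x))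
      _ ≤ absv a * absv b * (absv c * absv d) ⊔ absv x :=
          sup_mul_sup_le (mul_le_one' (absv_le_one a) (absv_le_one b))
            (mul_le_one' (absv_le_one c) (absv_le_one d)) (absv_le_one x)
      _ ≤ absv w ⊔ absv x := sup_le_sup_right hn _
  exact hY.convex (hY.mul_mem (hY.mul_mem hA hB) (hY.mul_mem hC hD)) hY.one_mem h1
    (sup_le (absv_le_one w) (absv_le_one x))

lemma bound_sup (a b : α) : absv a * absv b ≤ absv (a ⊔ b) := by
  apply le_absv
  · exact le_trans (mul_le_left' (absv_le_one b))
      (le_trans (absv_le_self a) le_sup_left)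
  · rw [mul_sup']
    apply sup_le
    · calc absv a * absv b * a = absv a * (absv b * a) := mul_assoc _ _ _
        _ ≤ absv a * a := mul_mono le_rfl (mul_le_right' (absv_le_one b))
        _ ≤ 1 := absv_mul_self_le a
    · calc absv a * absv b * b ≤ absv b * b :=
          mul_mono (mul_le_right' (absv_le_one a)) le_rfl
        _ ≤ 1 := absv_mul_self_le b
  · exact mul_le_one' (absv_le_one a) (absv_le_one b)

lemma bound_inf (a b : α) : absv a * absv b ≤ absv (a ⊓ b) := by
  apply le_absv
  · exact le_inf (le_trans (mul_le_left' (absv_le_one b)) (absv_le_self a))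
      (le_trans (mul_le_right' (absv_le_one a)) (absv_le_self b))
  · calc absv a * absv b * (a ⊓ b) ≤ absv b * (a ⊓ b) :=
        mul_mono (mul_le_right' (absv_le_one a)) le_rfl
      _ ≤ absv b * b := mul_mono le_rfl inf_le_right
      _ ≤ 1 := absv_mul_self_le b
  · exact mul_le_one' (absv_le_one a) (absv_le_one b)

lemma bound_mul (a b : α) :
    absv a * absv b * (absv b * absv a) ≤ absv (a * b) := by
  apply le_absv
  · calc absv a * absv b * (absv b * absv a) ≤ absv a * absv b :=
        mul_le_left' (mul_le_one' (absv_le_one b) (absv_le_one a))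
      _ ≤ a * b := mul_mono (absv_le_self a) (absv_le_self b)
  · calc absv a * absv b * (absv b * absv a) * (a * b)
        ≤ absv b * absv a * (a * b) :=
          mul_mono (mul_le_right' (mul_le_one' (absv_le_one a) (absv_le_one b))) le_rfl
      _ = absv b * (absv a * a) * b := by rw [mul_assoc, mul_assoc, mul_assoc]
      _ ≤ absv b * 1 * b := mul_mono (mul_mono le_rfl (absv_mul_self_le a)) le_rfl
      _ = absv b * b := by rw [mul_one]
      _ ≤ 1 := absv_mul_self_le b
  · exact mul_le_one' (mul_le_one' (absv_le_one a) (absv_le_one b))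
      (mul_le_one' (absv_le_one b) (absv_le_one a))

lemma bound_ldiv (hec : ECyclic α) (a b : α) :
    absv b * absv a * (absv a * absv b) ≤ absv (ldiv a b) := by
  apply le_absv
  · calc absv b * absv a * (absv a * absv b) ≤ absv a * absv b :=
        mul_le_right' (mul_le_one' (absv_le_one b) (absv_le_one a))
      _ ≤ ldiv a b := by
          apply le_ldiv_iff.2
          calc a * (absv a * absv b) = a * absv a * absv b := (mul_assoc _ _ _).symm
            _ ≤ 1 * absv b := mul_mono (self_mul_absv_le hec a) le_rfl
            _ = absv b := one_mul _
            _ ≤ b := absv_le_self b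
  · calc absv b * absv a * (absv a * absv b) * ldiv a b
        ≤ absv b * absv a * ldiv a b :=
          mul_mono (mul_le_left' (mul_le_one' (absv_le_one a) (absv_le_one b))) le_rfl
      _ = absv b * (absv a * ldiv a b) := mul_assoc _ _ _
      _ ≤ absv b * (a * ldiv a b) := mul_mono le_rfl (mul_mono (absv_le_self a) le_rfl)
      _ ≤ absv b * b := mul_mono le_rfl (mul_ldiv_le a b)
      _ ≤ 1 := absv_mul_self_le b
  · exact mul_le_one' (mul_le_one' (absv_le_one b) (absv_le_one a))
      (mul_le_one' (absv_le_one a) (absv_le_one b))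

lemma bound_rdiv (hec : ECyclic α) (a b : α) :
    absv a * absv b * (absv b * absv a) ≤ absv (rdiv a b) := by
  apply le_absv
  · calc absv a * absv b * (absv b * absv a) ≤ absv a * absv b :=
        mul_le_left' (mul_le_one' (absv_le_one b) (absv_le_one a))
      _ ≤ rdiv a b := by
          apply le_rdiv_iff.2
          calc absv a * absv b * b = absv a * (absv b * b) := mul_assoc _ _ _
            _ ≤ absv a * 1 := mul_mono le_rfl (absv_mul_self_le b)
            _ = absv a := mul_one _
            _ ≤ a := absv_le_self a
  · calc absv a * absv b * (absv b * absv a) * rdiv a b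
        ≤ absv b * absv a * rdiv a b :=
          mul_mono (mul_le_right' (mul_le_one' (absv_le_one a) (absv_le_one b))) le_rfl
      _ ≤ 1 := by
          have key : rdiv a b * (absv b * absv a) ≤ 1 := by
            calc rdiv a b * (absv b * absv a) = rdiv a b * absv b * absv a :=
                (mul_assoc _ _ _).symm
              _ ≤ rdiv a b * b * absv a :=
                mul_mono (mul_mono le_rfl (absv_le_self b)) le_rfl
              _ ≤ a * absv a := mul_mono (rdiv_mul_le a b) le_rfl
              _ ≤ 1 := self_mul_absv_le hec a
          have h2 : absv b * absv a ≤ rdiv 1 (rdiv a b) := by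
            rw [← hec (rdiv a b)]
            exact le_ldiv_iff.2 key
          exact le_rdiv_iff.1 h2
  · exact mul_le_one' (mul_le_one' (absv_le_one a) (absv_le_one b))
      (mul_le_one' (absv_le_one b) (absv_le_one a))

lemma bound_convex {a b c : α} (h1 : a ≤ c) (h2 : c ≤ b) :
    absv a * absv b ≤ absv c := by
  apply le_absv
  · exact le_trans (mul_le_left' (absv_le_one b)) (le_trans (absv_le_self a) h1)
  · calc absv a * absv b * c ≤ absv b * c :=
        mul_mono (mul_le_right' (absv_le_one a)) le_rfl
      _ ≤ absv b * b := mul_mono le_rfl h2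
      _ ≤ 1 := absv_mul_self_le b
  · exact mul_le_one' (absv_le_one a) (absv_le_one b)

theorem master (hec : ECyclic α) {X Y : Set α}
    (hX : IsConvexSubalgebra X) (hY : IsConvexSubalgebra Y) :
    IsConvexSubalgebra {a : α | ∀ x ∈ X, absv a ⊔ absv x ∈ Y} ∧
    X ∩ {a : α | ∀ x ∈ X, absv a ⊔ absv x ∈ Y} ⊆ Y ∧
    (∀ Z : Set α, IsConvexSubalgebra Z → X ∩ Z ⊆ Y →
      Z ⊆ {a : α | ∀ x ∈ X, absv a ⊔ absv x ∈ Y}) := by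
  refine ⟨⟨?_, ?_, ?_, ?_, ?_, ?_, ?_⟩, ?_, ?_⟩
  · -- one_mem
    intro x hx
    rw [absv_one, sup_eq_left.2 (absv_le_one x)]
    exact hY.one_mem
  · -- mul_mem
    intro a ha b hb x hx
    exact key4 hY (ha x hx) (hb x hx) (hb x hx) (ha x hx) (bound_mul a b)
  · -- sup_mem
    intro a ha b hb x hx
    exact key2 hY (ha x hx) (hb x hx) (bound_sup a b)
  · -- inf_mem
    intro a ha b hb x hx
    exact key2 hY (ha x hx) (hb x hx) (bound_inf a b)
  · -- ldiv_mem
    intro a ha b hb x hx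
    exact key4 hY (hb x hx) (ha x hx) (ha x hx) (hb x hx) (bound_ldiv hec a b)
  · -- rdiv_mem
    intro a ha b hb x hx
    exact key4 hY (ha x hx) (hb x hx) (hb x hx) (ha x hx) (bound_rdiv hec a b)
  · -- convex
    intro a ha b hb c h1 h2 x hx
    exact key2 hY (ha x hx) (hb x hx) (bound_convex h1 h2)
  · -- X ∩ H ⊆ Y
    rintro a ⟨haX, haH⟩
    have := haH a haX
    rw [sup_idem] at this
    exact mem_of_absv_mem hY this
  · -- maximality
    intro Z hZ hsub a haZ x hx
    have hZa : absv a ⊔ absv x ∈ Z :=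
      hZ.convex (absv_mem hZ haZ) hZ.one_mem le_sup_left
        (sup_le (absv_le_one a) (absv_le_one x))
    have hXa : absv a ⊔ absv x ∈ X :=
      hX.convex (absv_mem hX hx) hX.one_mem le_sup_right
        (sup_le (absv_le_one a) (absv_le_one x))
    exact hsub ⟨hXa, hZa⟩

lemma singleton_one_convex : IsConvexSubalgebra ({1} : Set α) := by
  refine ⟨rfl, ?_, ?_, ?_, ?_, ?_, ?_⟩
  · intro x hx y hy
    rw [Set.mem_singleton_iff] at hx hy ⊢
    rw [hx, hy, mul_one]
  · intro x hx y hy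
    rw [Set.mem_singleton_iff] at hx hy ⊢
    rw [hx, hy, sup_idem]
  · intro x hx y hy
    rw [Set.mem_singleton_iff] at hx hy ⊢
    rw [hx, hy, inf_idem]
  · intro x hx y hy
    rw [Set.mem_singleton_iff] at hx hy ⊢
    rw [hx, hy]; exact ldiv_one_one
  · intro x hx y hy
    rw [Set.mem_singleton_iff] at hx hy ⊢
    rw [hx, hy]; exact rdiv_one_one
  · intro a ha b hb x h1 h2
    rw [Set.mem_singleton_iff] at ha hb ⊢
    rw [ha] at h1; rw [hb] at h2
    exact le_antisymm h2 h1

end ResiduatedLattice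

/-- relative pseudocomplements and polars in the lattice of convex
subalgebras. -/
theorem stmt7 {α : Type u} [ResiduatedLattice α] (hec : ECyclic α)
    (X Y : Set α) (hX : IsConvexSubalgebra X) (hY : IsConvexSubalgebra Y) :
    IsConvexSubalgebra {a : α | ∀ x ∈ X, absv a ⊔ absv x ∈ Y} ∧
    X ∩ {a : α | ∀ x ∈ X, absv a ⊔ absv x ∈ Y} ⊆ Y ∧
    (∀ Z : Set α, IsConvexSubalgebra Z → X ∩ Z ⊆ Y →
      Z ⊆ {a : α | ∀ x ∈ X, absv a ⊔ absv x ∈ Y}) ∧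
    IsConvexSubalgebra (polar X) ∧
    X ∩ polar X = {1} ∧
    (∀ Z : Set α, IsConvexSubalgebra Z → X ∩ Z = {1} → Z ⊆ polar X) := by
  obtain ⟨m1, m2, m3⟩ := ResiduatedLattice.master hec hX hY
  obtain ⟨p1, p2, p3⟩ :=
    ResiduatedLattice.master hec hX (ResiduatedLattice.singleton_one_convex (α := α))
  have hpol : polar X = {a : α | ∀ x ∈ X, absv a ⊔ absv x ∈ ({1} : Set α)} := by
    ext a
    simp only [polar, Set.mem_setOf_eq, Set.mem_singleton_iff]
  refine ⟨m1, m2, m3, ?_, ?_, ?_⟩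
  · rw [hpol]; exact p1
  · apply le_antisymm
    · rw [hpol]; exact p2
    · intro a ha
      rw [Set.mem_singleton_iff] at ha
      subst ha
      refine ⟨hX.one_mem, fun s hs => ?_⟩
      rw [ResiduatedLattice.absv_one]
      exact sup_eq_left.2 (ResiduatedLattice.absv_le_one s)
  · intro Z hZ hXZ
    rw [hpol]
    exact p3 Z hZ (le_of_eq hXZ)
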